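/- If T = (A,B,C) and T' = (A',B',C') are nice and concordant triples, then the compound T'' = T⊗T' is nice; moreover α(T'') = α(T)+1 = α(T')+1, β(T'') = β(T)+β(T')+1, δ(T'') = δ(T)+δ(T')−α(T)+2, g(T'') = g(T)+g(T'), and n(T'') = n(T)+n(T')+g(T)·g(T'). -/

import Mathlib

/-- The three-letter alphabet `S = {0, 1, ∗}`. -/
inductive Tern | zero | one | star
deriving DecidableEq, Repr

/-- A string over `S`. -/
abbrev Str := List Tern

/-- A (ordered) list of strings over `S`. -/
abbrev SList := List Str

/-- `clash x y` is true iff both `x, y ∈ {0,1}` and `x ≠ y`. -/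
def clash : Tern → Tern → Bool
  | Tern.zero, Tern.one => true
  | Tern.one, Tern.zero => true
  | _, _ => false

/-- `dist u v`: the number of positions where both letters are binary and differ. -/
def distS (u v : Str) : ℕ := (u.zip v).countP (fun p => clash p.1 p.2)

/-- all strings of a list have length `m` -/
def uniform (L : SList) (m : ℕ) : Prop := ∀ s ∈ L, s.length = m

/-- A list is `k`-neighborly if any two entries occupying distinct positions `u, v`
satisfy `1 ≤ dist(u,v) ≤ k`. -/
def kNbr (k : ℕ) (L : SList) : Prop :=
  L.Pairwise (fun u v => 1 ≤ distS u v ∧ distS u v ≤ k)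

/-- The pairing `A ⊖ B`: entrywise concatenation of strings. -/
def pairL (A B : SList) : SList := List.zipWith (· ++ ·) A B

/-- The concatenation `AB = [v_i w_j]`, ordered lexicographically in `(i,j)`. -/
def concL (A B : SList) : SList := A.flatMap (fun u => B.map (fun v => u ++ v))

/-- the string `∗^m` of `m` jokers -/
def stars (m : ℕ) : Str := List.replicate m Tern.star

/-- A triple of lists `T = (A,B,C)` together with the (intended common) string
lengths `a` of the entries of `A` and `b` of the entries of `B` (and `C`). -/
structure Triple where
  a : ℕ
  b : ℕ
  A : SList
  B : SList
  C : SList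

namespace Triple

/-- `α(T)`: the common length of the strings of `A`. -/
def alpha (T : Triple) : ℕ := T.a

/-- `β(T)`: the common length of the strings of `B`. -/
def beta (T : Triple) : ℕ := T.b

/-- `δ(T) = α(T) + β(T)`. -/
def delta (T : Triple) : ℕ := T.a + T.b

/-- `n(T) = |A|`. -/
def nT (T : Triple) : ℕ := T.A.length

/-- `g(T) = |C|`. -/
def gT (T : Triple) : ℕ := T.C.length

/-- A triple `T = (A,B,C)` is nice if: (1) `dist(u,v) ≤ 1` for all entries `u,v` of `A`;
(2) `|A| = |B|` and `A ⊖ B` is 2-neighborly; (3) `C` is a 1-neighborly sublist of `B`,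
and `dist(u,v) ≤ 1` for every entry `u` of `B` and every entry `v` of `C`.
(The strings of `A` all have length `α(T)` and those of `B` length `β(T)`.) -/
def Nice (T : Triple) : Prop :=
  uniform T.A T.a ∧ uniform T.B T.b ∧
  (∀ u ∈ T.A, ∀ v ∈ T.A, distS u v ≤ 1) ∧
  T.A.length = T.B.length ∧
  kNbr 2 (pairL T.A T.B) ∧
  T.C.Sublist T.B ∧ kNbr 1 T.C ∧
  (∀ u ∈ T.B, ∀ v ∈ T.C, distS u v ≤ 1)

/-- `T, T'` are concordant if `α(T) = α(T')` and `dist(u,v) ≤ 1` for all entries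
`u, v` of `A + A'`. -/
def Concordant (T T' : Triple) : Prop :=
  T.a = T'.a ∧ ∀ u ∈ T.A ++ T'.A, ∀ v ∈ T.A ++ T'.A, distS u v ≤ 1

/-- The compound `T ⊗ T' = (A'', B'', C'')` where
`A'' = [0]A + [0]A' + (|C|·|C'|)·([1][∗^{α(T)}])`,
`B'' = [0]B[∗^{β(T')}] + [1][∗^{β(T)}]B' + [∗]CC'`,
`C'' = [0]C[∗^{β(T')}] + [1][∗^{β(T)}]C'`. -/
def compound (T T' : Triple) : Triple where
  a := T.a + 1
  b := T.b + T'.b + 1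
  A := (T.A.map (fun u => Tern.zero :: u)) ++ (T'.A.map (fun u => Tern.zero :: u)) ++
       List.replicate (T.C.length * T'.C.length) (Tern.one :: stars T.a)
  B := (T.B.map (fun u => Tern.zero :: (u ++ stars T'.b))) ++
       (T'.B.map (fun u => Tern.one :: (stars T.b ++ u))) ++
       ((concL T.C T'.C).map (fun u => Tern.star :: u))
  C := (T.C.map (fun u => Tern.zero :: (u ++ stars T'.b))) ++
       (T'.C.map (fun u => Tern.one :: (stars T.b ++ u)))

/-- `T, T'` are congruent if they are concordant, `β(T) = β(T')`, `n(T) = n(T')`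
and `g(T) = g(T')`. -/
def Congruent (T T' : Triple) : Prop :=
  Concordant T T' ∧ T.b = T'.b ∧ T.A.length = T'.A.length ∧ T.C.length = T'.C.length

end Triple

-- helpers
lemma clash_star_right (x : Tern) : clash x Tern.star = false := by cases x <;> rfl
lemma clash_star_left (x : Tern) : clash Tern.star x = false := rfl
lemma clash_self (x : Tern) : clash x x = false := by cases x <;> rfl
lemma clash_comm (x y : Tern) : clash x y = clash y x := by cases x <;> cases y <;> rfl
lemma stars_length (m : ℕ) : (stars m).length = m := by simp [stars]

lemma distS_nil_left (v : Str) : distS [] v = 0 := rfl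
lemma distS_nil_right (u : Str) : distS u [] = 0 := by simp [distS]
lemma distS_cons (x y : Tern) (u v : Str) :
    distS (x::u) (y::v) = distS u v + (if clash x y then 1 else 0) := by
  simp [distS, List.countP_cons]
lemma distS_comm (u v : Str) : distS u v = distS v u := by
  induction u generalizing v with
  | nil => cases v <;> simp [distS_nil_left, distS_nil_right]
  | cons x u ih =>
    cases v with
    | nil => simp [distS_nil_left, distS_nil_right]
    | cons y v => simp [distS_cons, ih, clash_comm x y]
lemma distS_stars_right (u : Str) (m : ℕ) : distS u (stars m) = 0 := by
  induction u generalizing m with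
  | nil => rfl
  | cons x u ih =>
    cases m with
    | zero => simp [stars, distS_nil_right]
    | succ m =>
      rw [stars, List.replicate_succ, distS_cons, clash_star_right]
      simpa [stars] using ih m
lemma distS_stars_left (u : Str) (m : ℕ) : distS (stars m) u = 0 := by
  rw [distS_comm]; exact distS_stars_right u m
lemma distS_self (u : Str) : distS u u = 0 := by
  induction u with
  | nil => rfl
  | cons x u ih => simp [distS_cons, ih, clash_self]
lemma distS_append {u1 u2 : Str} (v1 v2 : Str) (h : u1.length = u2.length) :
    distS (u1 ++ v1) (u2 ++ v2) = distS u1 u2 + distS v1 v2 := by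
  unfold distS; rw [List.zip_append h, List.countP_append]

lemma d_cons00 (u v : Str) : distS (Tern.zero::u) (Tern.zero::v) = distS u v := by
  simp [distS_cons, clash]
lemma d_cons11 (u v : Str) : distS (Tern.one::u) (Tern.one::v) = distS u v := by
  simp [distS_cons, clash]
lemma d_cons01 (u v : Str) : distS (Tern.zero::u) (Tern.one::v) = distS u v + 1 := by
  simp [distS_cons, clash]
lemma d_cons10 (u v : Str) : distS (Tern.one::u) (Tern.zero::v) = distS u v + 1 := by
  simp [distS_cons, clash]
lemma d_consSL (x : Tern) (u v : Str) : distS (Tern.star::u) (x::v) = distS u v := by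
  simp [distS_cons, clash_star_left]
lemma d_consSR (x : Tern) (u v : Str) : distS (x::u) (Tern.star::v) = distS u v := by
  simp [distS_cons, clash_star_right]

-- B/C-entry distance lemmas
lemma dM11 {v1 v2 : Str} (h : v1.length = v2.length) (b' : ℕ) :
    distS (Tern.zero::(v1++stars b')) (Tern.zero::(v2++stars b')) = distS v1 v2 := by
  rw [d_cons00, distS_append _ _ h, distS_self]
  omega
lemma dM22 {b : ℕ} (v1 v2 : Str) :
    distS (Tern.one::(stars b++v1)) (Tern.one::(stars b++v2)) = distS v1 v2 := by
  rw [d_cons11, distS_append _ _ rfl, distS_self]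
  omega
lemma dM12 {v1 : Str} {b : ℕ} (h : v1.length = b) (b' : ℕ) (v2 : Str) :
    distS (Tern.zero::(v1++stars b')) (Tern.one::(stars b++v2)) = 1 := by
  rw [d_cons01, distS_append _ _ (by simp [h, stars_length]),
    distS_stars_right, distS_stars_left]
lemma dM21 {v2 : Str} {b : ℕ} (h : v2.length = b) (b' : ℕ) (v1 : Str) :
    distS (Tern.one::(stars b++v1)) (Tern.zero::(v2++stars b')) = 1 := by
  rw [d_cons10, distS_append _ _ (by simp [h, stars_length]),
    distS_stars_right, distS_stars_left]
lemma dM31 {c v : Str} (h : c.length = v.length) (c' : Str) (b' : ℕ) :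
    distS (Tern.star::(c++c')) (Tern.zero::(v++stars b')) = distS c v := by
  rw [d_consSL, distS_append _ _ h, distS_stars_right]
  omega
lemma dM32 {c : Str} {b : ℕ} (h : c.length = b) (c' v' : Str) :
    distS (Tern.star::(c++c')) (Tern.one::(stars b++v')) = distS c' v' := by
  rw [d_consSL, distS_append _ _ (by simp [h, stars_length]), distS_stars_right]
  omega

-- paired-entry distance lemmas
lemma dP11 {u1 u2 v1 v2 : Str} (hu : u1.length = u2.length) (hv : v1.length = v2.length)
    (b' : ℕ) :
    distS ((Tern.zero::u1)++(Tern.zero::(v1++stars b')))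
          ((Tern.zero::u2)++(Tern.zero::(v2++stars b'))) = distS (u1++v1) (u2++v2) := by
  rw [distS_append _ _ (by simp [hu]), d_cons00, dM11 hv, distS_append _ _ hu]
lemma dP22 {u1 u2 : Str} (hu : u1.length = u2.length) {b : ℕ} (v1 v2 : Str) :
    distS ((Tern.zero::u1)++(Tern.one::(stars b++v1)))
          ((Tern.zero::u2)++(Tern.one::(stars b++v2))) = distS (u1++v1) (u2++v2) := by
  rw [distS_append _ _ (by simp [hu]), d_cons00, dM22, distS_append _ _ hu]
lemma dP12 {u1 u2 v1 : Str} {b : ℕ} (hu : u1.length = u2.length) (hv : v1.length = b)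
    (b' : ℕ) (v2 : Str) :
    distS ((Tern.zero::u1)++(Tern.zero::(v1++stars b')))
          ((Tern.zero::u2)++(Tern.one::(stars b++v2))) = distS u1 u2 + 1 := by
  rw [distS_append _ _ (by simp [hu]), d_cons00, dM12 hv]
lemma dP13 {u1 v1 c : Str} {a : ℕ} (hu : u1.length = a) (hv : v1.length = c.length)
    (b' : ℕ) (c' : Str) :
    distS ((Tern.zero::u1)++(Tern.zero::(v1++stars b')))
          ((Tern.one::stars a)++(Tern.star::(c++c'))) = distS v1 c + 1 := by
  rw [distS_append _ _ (by simp [hu, stars_length]), d_cons01, distS_stars_right,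
    d_consSR, distS_append _ _ hv, distS_stars_left]
  ring
lemma dP23 {u1 c : Str} {a b : ℕ} (hu : u1.length = a) (hc : c.length = b)
    (v1 c' : Str) :
    distS ((Tern.zero::u1)++(Tern.one::(stars b++v1)))
          ((Tern.one::stars a)++(Tern.star::(c++c'))) = distS v1 c' + 1 := by
  rw [distS_append _ _ (by simp [hu, stars_length]), d_cons01, distS_stars_right,
    d_consSR, distS_append _ _ (by simp [hc, stars_length]), distS_stars_left]
  ring
lemma dP33 {c1 c2 : Str} (h : c1.length = c2.length) {a : ℕ} (c1' c2' : Str) :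
    distS ((Tern.one::stars a)++(Tern.star::(c1++c1')))
          ((Tern.one::stars a)++(Tern.star::(c2++c2'))) = distS c1 c2 + distS c1' c2' := by
  rw [distS_append _ _ (by simp [stars_length]), d_cons11, distS_self, d_consSL,
    distS_append _ _ h]
  omega

-- structural helpers
lemma mem_concL {x : Str} {A B : SList} :
    x ∈ concL A B ↔ ∃ u ∈ A, ∃ v ∈ B, x = u ++ v := by
  simp [concL, List.mem_flatMap, eq_comm]
lemma length_concL (A B : SList) : (concL A B).length = A.length * B.length := by
  induction A with
  | nil => simp [concL]
  | cons u A ih => simp [concL, List.flatMap_cons] at *; ring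
lemma zipWith_replicate_left' {α β γ : Type*} (f : α → β → γ) (c : α) :
    ∀ (l : List β) (n : ℕ), l.length = n →
      List.zipWith f (List.replicate n c) l = l.map (f c) := by
  intro l
  induction l with
  | nil => intro n _; simp
  | cons b l ih =>
    intro n hn
    cases n with
    | zero => simp at hn
    | succ n => simp [List.replicate_succ, ih n (by simpa using hn)]
lemma pairL_eq_map (A B : SList) :
    pairL A B = (A.zip B).map (fun p => p.1 ++ p.2) := by
  rw [pairL, ← List.map_uncurry_zip_eq_zipWith]; rfl


open Triple in
/-- If `T, T'` are nice and concordant, then `T'' = T ⊗ T'` is nice; moreover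
`α(T'') = α(T)+1 = α(T')+1`, `β(T'') = β(T)+β(T')+1`, `δ(T'') = δ(T)+δ(T')−α(T)+2`,
`g(T'') = g(T)+g(T')` and `n(T'') = n(T)+n(T')+g(T)·g(T')`. -/
theorem compound_nice_and_params (T T' : Triple) (hT : Nice T) (hT' : Nice T')
    (h : Concordant T T') :
    Nice (compound T T') ∧
    alpha (compound T T') = alpha T + 1 ∧
    alpha (compound T T') = alpha T' + 1 ∧
    beta (compound T T') = beta T + beta T' + 1 ∧
    delta (compound T T') = delta T + delta T' - alpha T + 2 ∧
    gT (compound T T') = gT T + gT T' ∧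
    nT (compound T T') = nT T + nT T' + gT T * gT T' := by
  obtain ⟨hAu, hBu, hAd, hlen, hk2, hsub, hC1, hBC⟩ := hT
  obtain ⟨hAu', hBu', hAd', hlen', hk2', hsub', hC1', hBC'⟩ := hT'
  obtain ⟨ha, hcc⟩ := h
  have hCu : uniform T.C T.b := fun s hs => hBu s (hsub.subset hs)
  have hCu' : uniform T'.C T'.b := fun s hs => hBu' s (hsub'.subset hs)
  have hCB : ∀ s ∈ T.C, s ∈ T.B := fun s hs => hsub.subset hs
  have hCB' : ∀ s ∈ T'.C, s ∈ T'.B := fun s hs => hsub'.subset hs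
  have memA : ∀ s ∈ (compound T T').A,
      (∃ x, (x ∈ T.A ∨ x ∈ T'.A) ∧ s = Tern.zero :: x) ∨ s = Tern.one :: stars T.a := by
    intro s hs
    simp only [compound] at hs
    rcases List.mem_append.1 hs with h1 | h1
    · rcases List.mem_append.1 h1 with h2 | h2
      · obtain ⟨u, hu, rfl⟩ := List.mem_map.1 h2
        exact Or.inl ⟨u, Or.inl hu, rfl⟩
      · obtain ⟨u, hu, rfl⟩ := List.mem_map.1 h2
        exact Or.inl ⟨u, Or.inr hu, rfl⟩
    · exact Or.inr (List.eq_of_mem_replicate h1)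
  have memB : ∀ s ∈ (compound T T').B,
      (∃ w ∈ T.B, s = Tern.zero :: (w ++ stars T'.b)) ∨
      (∃ w ∈ T'.B, s = Tern.one :: (stars T.b ++ w)) ∨
      (∃ c ∈ T.C, ∃ c' ∈ T'.C, s = Tern.star :: (c ++ c')) := by
    intro s hs
    simp only [compound] at hs
    rcases List.mem_append.1 hs with h1 | h1
    · rcases List.mem_append.1 h1 with h2 | h2
      · obtain ⟨u, hu, rfl⟩ := List.mem_map.1 h2
        exact Or.inl ⟨u, hu, rfl⟩
      · obtain ⟨u, hu, rfl⟩ := List.mem_map.1 h2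
        exact Or.inr (Or.inl ⟨u, hu, rfl⟩)
    · obtain ⟨w, hw, rfl⟩ := List.mem_map.1 h1
      obtain ⟨c, hc, c', hc', rfl⟩ := mem_concL.1 hw
      exact Or.inr (Or.inr ⟨c, hc, c', hc', rfl⟩)
  have memC : ∀ s ∈ (compound T T').C,
      (∃ c ∈ T.C, s = Tern.zero :: (c ++ stars T'.b)) ∨
      (∃ c ∈ T'.C, s = Tern.one :: (stars T.b ++ c)) := by
    intro s hs
    simp only [compound] at hs
    rcases List.mem_append.1 hs with h1 | h1
    · obtain ⟨u, hu, rfl⟩ := List.mem_map.1 h1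
      exact Or.inl ⟨u, hu, rfl⟩
    · obtain ⟨u, hu, rfl⟩ := List.mem_map.1 h1
      exact Or.inr ⟨u, hu, rfl⟩
  constructor
  · -- Nice (compound T T')
    refine ⟨?_, ?_, ?_, ?_, ?_, ?_, ?_, ?_⟩
    · -- uniform A''
      intro s hs
      show s.length = T.a + 1
      rcases memA s hs with ⟨x, hx, rfl⟩ | rfl
      · rcases hx with hx | hx
        · simp [hAu x hx]
        · simp [hAu' x hx, ← ha]
      · simp [stars_length]
    · -- uniform B''
      intro s hs
      show s.length = T.b + T'.b + 1
      rcases memB s hs with ⟨w, hw, rfl⟩ | ⟨w, hw, rfl⟩ | ⟨c, hc, c', hc', rfl⟩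
      · simp [hBu w hw, stars_length]
      · simp [hBu' w hw, stars_length]
      · simp [hCu c hc, hCu' c' hc']
    · -- distS ≤ 1 on A''
      intro u hu v hv
      rcases memA u hu with ⟨x, hx, rfl⟩ | rfl <;>
        rcases memA v hv with ⟨y, hy, rfl⟩ | rfl
      · rw [d_cons00]
        exact hcc x (List.mem_append.2 hx) y (List.mem_append.2 hy)
      · simp [d_cons01, distS_stars_right]
      · simp [d_cons10, distS_stars_left]
      · simp [d_cons11, distS_self]
    · -- lengths equal
      simp [compound, hlen, hlen', length_concL]
    · -- kNbr 2
      have hk2z : List.Pairwise (fun p q : Str × Str =>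
          1 ≤ distS (p.1 ++ p.2) (q.1 ++ q.2) ∧ distS (p.1 ++ p.2) (q.1 ++ q.2) ≤ 2)
          (T.A.zip T.B) := by
        have h0 := hk2; rw [kNbr, pairL_eq_map, List.pairwise_map] at h0; exact h0
      have hk2z' : List.Pairwise (fun p q : Str × Str =>
          1 ≤ distS (p.1 ++ p.2) (q.1 ++ q.2) ∧ distS (p.1 ++ p.2) (q.1 ++ q.2) ≤ 2)
          (T'.A.zip T'.B) := by
        have h0 := hk2'; rw [kNbr, pairL_eq_map, List.pairwise_map] at h0; exact h0
      simp only [compound, kNbr, pairL]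
      rw [List.zipWith_append (by simp [hlen, hlen']),
          List.zipWith_append (by simp [hlen, hlen'])]
      have e1 : List.zipWith (· ++ ·) (T.A.map fun u => Tern.zero :: u)
            (T.B.map fun u => Tern.zero :: (u ++ stars T'.b))
          = (T.A.zip T.B).map
            (fun p => (Tern.zero :: p.1) ++ (Tern.zero :: (p.2 ++ stars T'.b))) := by
        rw [List.zipWith_map, ← List.map_uncurry_zip_eq_zipWith]; rfl
      have e2 : List.zipWith (· ++ ·) (T'.A.map fun u => Tern.zero :: u)
            (T'.B.map fun u => Tern.one :: (stars T.b ++ u))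
          = (T'.A.zip T'.B).map
            (fun p => (Tern.zero :: p.1) ++ (Tern.one :: (stars T.b ++ p.2))) := by
        rw [List.zipWith_map, ← List.map_uncurry_zip_eq_zipWith]; rfl
      have e3 : List.zipWith (· ++ ·)
            (List.replicate (T.C.length * T'.C.length) (Tern.one :: stars T.a))
            ((concL T.C T'.C).map fun u => Tern.star :: u)
          = (concL T.C T'.C).map
            (fun u => (Tern.one :: stars T.a) ++ (Tern.star :: u)) := by
        rw [zipWith_replicate_left' _ _ _ _ (by simp [length_concL]), List.map_map]; rfl
      rw [e1, e2, e3, List.pairwise_append, List.pairwise_append]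
      refine ⟨⟨?_, ?_, ?_⟩, ?_, ?_⟩
      · -- Pairwise P1
        rw [List.pairwise_map]
        refine List.Pairwise.imp_of_mem ?_ hk2z
        intro p q hp hq hpq
        obtain ⟨hp1, hp2⟩ := List.of_mem_zip hp
        obtain ⟨hq1, hq2⟩ := List.of_mem_zip hq
        rw [dP11 (by rw [hAu _ hp1, hAu _ hq1]) (by rw [hBu _ hp2, hBu _ hq2])]
        exact hpq
      · -- Pairwise P2
        rw [List.pairwise_map]
        refine List.Pairwise.imp_of_mem ?_ hk2z'
        intro p q hp hq hpq
        obtain ⟨hp1, hp2⟩ := List.of_mem_zip hp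
        rw [dP22 (by rw [hAu' _ hp1, hAu' _ (List.of_mem_zip hq).1])]
        exact hpq
      · -- cross P1 P2
        intro x hx y hy
        obtain ⟨p, hp, rfl⟩ := List.mem_map.1 hx
        obtain ⟨hp1, hp2⟩ := List.of_mem_zip hp
        obtain ⟨q, hq, rfl⟩ := List.mem_map.1 hy
        obtain ⟨hq1, hq2⟩ := List.of_mem_zip hq
        rw [dP12 (by rw [hAu _ hp1, hAu' _ hq1, ← ha]) (hBu _ hp2)]
        have h3 := hcc p.1 (List.mem_append.2 (Or.inl hp1)) q.1
          (List.mem_append.2 (Or.inr hq1))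
        omega
      · -- Pairwise P3
        rw [List.pairwise_map]
        simp only [concL, List.flatMap_def]
        rw [List.pairwise_flatten]
        constructor
        · intro l hl
          obtain ⟨c, hc, rfl⟩ := List.mem_map.1 hl
          rw [List.pairwise_map]
          refine List.Pairwise.imp_of_mem ?_ hC1'
          intro c1' c2' h1 h2 hd
          rw [dP33 rfl, distS_self]
          omega
        · rw [List.pairwise_map]
          refine List.Pairwise.imp_of_mem ?_ hC1
          intro c1 c2 h1 h2 hd x hx y hy
          obtain ⟨c1', hc1', rfl⟩ := List.mem_map.1 hx
          obtain ⟨c2', hc2', rfl⟩ := List.mem_map.1 hy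
          rw [dP33 (by rw [hCu _ h1, hCu _ h2])]
          have h3 : distS c1' c2' ≤ 1 := hBC' _ (hCB' _ hc1') c2' hc2'
          omega
      · -- cross (P1 ++ P2) P3
        intro x hx y hy
        obtain ⟨w, hw, rfl⟩ := List.mem_map.1 hy
        obtain ⟨c, hc, c', hc', rfl⟩ := mem_concL.1 hw
        rcases List.mem_append.1 hx with hx1 | hx1
        · obtain ⟨p, hp, rfl⟩ := List.mem_map.1 hx1
          obtain ⟨hp1, hp2⟩ := List.of_mem_zip hp
          rw [dP13 (hAu _ hp1) (by rw [hBu _ hp2, hCu _ hc])]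
          have h3 := hBC p.2 hp2 c hc
          omega
        · obtain ⟨p, hp, rfl⟩ := List.mem_map.1 hx1
          obtain ⟨hp1, hp2⟩ := List.of_mem_zip hp
          rw [dP23 (by rw [hAu' _ hp1, ha]) (hCu _ hc)]
          have h3 : distS p.2 c' ≤ 1 := hBC' _ hp2 c' hc'
          omega
    · -- sublist
      simp only [compound]
      exact ((List.Sublist.map _ hsub).append (List.Sublist.map _ hsub')).trans
        (List.sublist_append_left _ _)
    · -- kNbr 1 C''
      simp only [compound, kNbr]
      rw [List.pairwise_append]
      refine ⟨?_, ?_, ?_⟩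
      · rw [List.pairwise_map]
        refine List.Pairwise.imp_of_mem ?_ hC1
        intro c1 c2 h1 h2 hd
        rw [dM11 (by rw [hCu _ h1, hCu _ h2])]
        exact hd
      · rw [List.pairwise_map]
        refine List.Pairwise.imp_of_mem ?_ hC1'
        intro c1 c2 h1 h2 hd
        rw [dM22]
        exact hd
      · intro x hx y hy
        obtain ⟨c, hc, rfl⟩ := List.mem_map.1 hx
        obtain ⟨c', hc', rfl⟩ := List.mem_map.1 hy
        rw [dM12 (hCu _ hc)]
        exact ⟨le_refl _, le_refl _⟩
    · -- B'' C'' distances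
      intro u hu v hv
      rcases memC v hv with ⟨c, hc, rfl⟩ | ⟨c, hc, rfl⟩
      · rcases memB u hu with ⟨w, hw, rfl⟩ | ⟨w, hw, rfl⟩ | ⟨c0, hc0, c0', hc0', rfl⟩
        · rw [dM11 (by rw [hBu _ hw, hCu _ hc])]
          exact hBC w hw c hc
        · rw [dM21 (hCu _ hc)]
        · rw [dM31 (by rw [hCu _ hc0, hCu _ hc])]
          exact hBC c0 (hCB _ hc0) c hc
      · rcases memB u hu with ⟨w, hw, rfl⟩ | ⟨w, hw, rfl⟩ | ⟨c0, hc0, c0', hc0', rfl⟩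
        · rw [dM12 (hBu _ hw)]
        · rw [dM22]
          exact hBC' w hw c hc
        · rw [dM32 (hCu _ hc0)]
          exact hBC' c0' (hCB' _ hc0') c hc
  · refine ⟨rfl, ?_, rfl, ?_, ?_, ?_⟩
    · simp [alpha, compound, ha]
    · simp only [delta, alpha, compound]; omega
    · simp [gT, compound]
    · simp [nT, gT, compound, length_concL]; omega
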